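/- Let c > 0 and let f : ℝ → ℝ be given on (0, ∞) by the Lévy density f(z) = √(c/(2π)) · z^{−3/2} · exp(−c/(2z)). Then the function g(z) = f′(z)/f(z)² satisfies g(z) = √(π/(2·c·z)) · exp(c/(2z)) · (c − 3z) for all z > 0, its derivative is g′(z) = −√(π/(8·c·z⁵)) · exp(c/(2z)) · (c² − 2cz + 3z²), and g′(z) < 0 for every z > 0; in particular g is strictly decreasing on (0, ∞). -/

import Mathlib

open Set

lemma levy_sqrt_eq_mul {x a b : ℝ} (ha : 0 ≤ a) (hb : 0 ≤ b) (h : x = a * b ^ 2) :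
    Real.sqrt x = Real.sqrt a * b := by
  rw [h, Real.sqrt_mul ha, Real.sqrt_sq hb]

theorem levy_g_strict_anti
    (c : ℝ) (hc : 0 < c)
    (f : ℝ → ℝ)
    (hf : ∀ z ∈ Ioi (0 : ℝ),
      f z = Real.sqrt (c / (2 * Real.pi)) * z ^ (-(3 : ℝ) / 2) * Real.exp (-c / (2 * z))) :
    (∀ z ∈ Ioi (0 : ℝ),
      deriv f z / (f z) ^ 2
        = Real.sqrt (Real.pi / (2 * c * z)) * Real.exp (c / (2 * z)) * (c - 3 * z) ∧
      deriv (fun w => deriv f w / (f w) ^ 2) z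
        = -Real.sqrt (Real.pi / (8 * c * z ^ 5)) * Real.exp (c / (2 * z)) *
            (c ^ 2 - 2 * c * z + 3 * z ^ 2) ∧
      deriv (fun w => deriv f w / (f w) ^ 2) z < 0) ∧
    StrictAntiOn (fun z => deriv f z / (f z) ^ 2) (Ioi 0) := by
  have hπ := Real.pi_pos
  set A : ℝ := Real.sqrt (c / (2 * Real.pi)) with hAdef
  have hApos : 0 < A := Real.sqrt_pos.2 (by positivity)
  set B : ℝ := Real.sqrt (Real.pi / (2 * c)) with hBdef
  have hBpos : 0 < B := Real.sqrt_pos.2 (by positivity)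
  have hAB : A * B = 1 / 2 := by
    rw [hAdef, hBdef, ← Real.sqrt_mul (by positivity),
      show c / (2 * Real.pi) * (Real.pi / (2 * c)) = (1/2 : ℝ)^2 by
        field_simp]
    exact Real.sqrt_sq (by norm_num)
  set G : ℝ → ℝ := fun w => B * w ^ (-(1:ℝ)/2) * Real.exp (c / (2 * w)) * (c - 3 * w)
    with hGdef
  -- rpow facts
  have e12 : ∀ z : ℝ, 0 < z → z ^ (-(1:ℝ)/2) = (Real.sqrt z)⁻¹ := by
    intro z hz
    rw [show (-(1:ℝ)/2) = -(1/2) by norm_num, Real.rpow_neg hz.le, ← Real.sqrt_eq_rpow]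
  have e32 : ∀ z : ℝ, 0 < z → z ^ (-(3:ℝ)/2) = (z * Real.sqrt z)⁻¹ := by
    intro z hz
    rw [show (-(3:ℝ)/2) = -(3/2) by norm_num, Real.rpow_neg hz.le]
    congr 1
    rw [show (3/2:ℝ) = 1 + 1/2 by norm_num, Real.rpow_add hz, Real.rpow_one,
      ← Real.sqrt_eq_rpow]
  have e52 : ∀ z : ℝ, 0 < z → z ^ (-(3:ℝ)/2 - 1) = (z^2 * Real.sqrt z)⁻¹ := by
    intro z hz
    rw [show (-(3:ℝ)/2 - 1 : ℝ) = -(5/2) by norm_num, Real.rpow_neg hz.le]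
    congr 1
    rw [show (5/2:ℝ) = 2 + 1/2 by norm_num, Real.rpow_add hz, ← Real.sqrt_eq_rpow,
      show ((2:ℝ)) = ((2:ℕ):ℝ) by norm_num, Real.rpow_natCast]
  -- derivative of f on Ioi 0
  have hFd : ∀ z : ℝ, 0 < z →
      HasDerivAt (fun w : ℝ => A * w ^ (-(3:ℝ)/2) * Real.exp (-c / (2 * w)))
        (A * ((-(3:ℝ)/2) * z ^ (-(3:ℝ)/2 - 1)) * Real.exp (-c / (2 * z)) +
          A * z ^ (-(3:ℝ)/2) * (Real.exp (-c / (2 * z)) * (c / (2 * z^2)))) z := by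
    intro z hz
    have hz' : z ≠ 0 := ne_of_gt hz
    have hP : HasDerivAt (fun w : ℝ => w ^ (-(3:ℝ)/2)) ((-(3:ℝ)/2) * z ^ (-(3:ℝ)/2 - 1)) z :=
      Real.hasDerivAt_rpow_const (Or.inl hz')
    have hi : HasDerivAt (fun w : ℝ => -c / (2 * w)) (c / (2 * z^2)) z := by
      have h0 : HasDerivAt (fun w : ℝ => (-c/2) * w⁻¹) ((-c/2) * -(z^2)⁻¹) z :=
        (hasDerivAt_inv hz').const_mul (-c/2)
      have hfun : (fun w : ℝ => (-c/2) * w⁻¹) = fun w : ℝ => -c / (2 * w) := by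
        funext w; ring
      rw [hfun] at h0
      convert h0 using 1
      field_simp
    have hE : HasDerivAt (fun w : ℝ => Real.exp (-c / (2 * w)))
        (Real.exp (-c / (2 * z)) * (c / (2 * z^2))) z := hi.exp
    exact (hP.const_mul A).mul hE
  -- closed form of g = f'/f² on Ioi 0
  have key1 : ∀ z ∈ Ioi (0:ℝ), deriv f z / (f z) ^ 2 = G z := by
    intro z hz
    have hz' : z ≠ 0 := ne_of_gt hz
    have hfF : f =ᶠ[nhds z] (fun w : ℝ => A * w ^ (-(3:ℝ)/2) * Real.exp (-c / (2 * w))) := by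
      filter_upwards [isOpen_Ioi.mem_nhds hz] with w hw using hf w hw
    have hdf : deriv f z =
        A * ((-(3:ℝ)/2) * z ^ (-(3:ℝ)/2 - 1)) * Real.exp (-c / (2 * z)) +
          A * z ^ (-(3:ℝ)/2) * (Real.exp (-c / (2 * z)) * (c / (2 * z^2))) := by
      rw [hfF.deriv_eq]; exact (hFd z hz).deriv
    have hs2 : Real.sqrt z ^ 2 = z := Real.sq_sqrt hz.le
    have hspos : 0 < Real.sqrt z := Real.sqrt_pos.2 hz
    have hXpos : 0 < Real.exp (c / (2 * z)) := Real.exp_pos _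
    have hEneg : Real.exp (-c / (2 * z)) = (Real.exp (c / (2 * z)))⁻¹ := by
      rw [neg_div, Real.exp_neg]
    have hB' : B = 1 / (2 * A) := by
      field_simp
      linarith [hAB]
    rw [hdf, hf z hz, hGdef]
    simp only
    rw [e32 z hz, e52 z hz, e12 z hz, hEneg, hB']
    set s := Real.sqrt z with hsdef
    rw [← hs2]
    have hs0 : s ≠ 0 := ne_of_gt hspos
    have hA0 : A ≠ 0 := ne_of_gt hApos
    have hX0 : Real.exp (c / (2 * s^2)) ≠ 0 := (Real.exp_pos _).ne'
    field_simp
    ring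
  -- derivative of G on Ioi 0
  have hGd : ∀ z : ℝ, 0 < z →
      HasDerivAt G
        ((B * ((-(1:ℝ)/2) * z ^ (-(1:ℝ)/2 - 1)) * Real.exp (c / (2 * z)) +
          B * z ^ (-(1:ℝ)/2) * (Real.exp (c / (2 * z)) * (-c / (2 * z^2)))) * (c - 3 * z) +
          B * z ^ (-(1:ℝ)/2) * Real.exp (c / (2 * z)) * (-3)) z := by
    intro z hz
    have hz' : z ≠ 0 := ne_of_gt hz
    have hP : HasDerivAt (fun w : ℝ => w ^ (-(1:ℝ)/2)) ((-(1:ℝ)/2) * z ^ (-(1:ℝ)/2 - 1)) z :=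
      Real.hasDerivAt_rpow_const (Or.inl hz')
    have hi : HasDerivAt (fun w : ℝ => c / (2 * w)) (-c / (2 * z^2)) z := by
      have h0 : HasDerivAt (fun w : ℝ => (c/2) * w⁻¹) ((c/2) * -(z^2)⁻¹) z :=
        (hasDerivAt_inv hz').const_mul (c/2)
      have hfun : (fun w : ℝ => (c/2) * w⁻¹) = fun w : ℝ => c / (2 * w) := by
        funext w; ring
      rw [hfun] at h0
      convert h0 using 1
      field_simp
    have hE : HasDerivAt (fun w : ℝ => Real.exp (c / (2 * w)))
        (Real.exp (c / (2 * z)) * (-c / (2 * z^2))) z := hi.exp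
    have hL : HasDerivAt (fun w : ℝ => c - 3 * w) (-3) z := by
      have : HasDerivAt (fun w : ℝ => c - 3 * w) (0 - 3 * 1) z :=
        (hasDerivAt_const z c).sub ((hasDerivAt_id z).const_mul 3)
      simpa using this
    exact ((hP.const_mul B).mul hE).mul hL
  -- clause 2: closed form of g'
  have key2 : ∀ z ∈ Ioi (0:ℝ),
      deriv (fun w => deriv f w / (f w) ^ 2) z
        = -Real.sqrt (Real.pi / (8 * c * z ^ 5)) * Real.exp (c / (2 * z)) *
            (c ^ 2 - 2 * c * z + 3 * z ^ 2) := by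
    intro z hz
    have h0z : (0:ℝ) < z := hz
    have hz' : z ≠ 0 := ne_of_gt hz
    have hgG : (fun w => deriv f w / (f w) ^ 2) =ᶠ[nhds z] G := by
      filter_upwards [isOpen_Ioi.mem_nhds hz] with w hw using key1 w hw
    rw [hgG.deriv_eq, (hGd z hz).deriv]
    have hs2 : Real.sqrt z ^ 2 = z := Real.sq_sqrt hz.le
    have hspos : 0 < Real.sqrt z := Real.sqrt_pos.2 hz
    have hCz : Real.sqrt (Real.pi / (8 * c * z ^ 5))
        = B * (2 * z^2 * Real.sqrt z)⁻¹ := by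
      apply levy_sqrt_eq_mul (by positivity) (by positivity)
      rw [inv_pow, mul_pow, mul_pow, hs2]
      field_simp
      norm_num
    have e32' : z ^ (-(1:ℝ)/2 - 1) = (z * Real.sqrt z)⁻¹ := by
      rw [show (-(1:ℝ)/2 - 1 : ℝ) = -(3:ℝ)/2 by norm_num]
      exact e32 z hz
    rw [hCz, e32', e12 z hz]
    set s := Real.sqrt z with hsdef
    rw [← hs2]
    have hs0 : s ≠ 0 := ne_of_gt hspos
    have hX0 : Real.exp (c / (2 * s^2)) ≠ 0 := (Real.exp_pos _).ne'
    field_simp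
    ring
  -- clause 3
  have key3 : ∀ z ∈ Ioi (0:ℝ), deriv (fun w => deriv f w / (f w) ^ 2) z < 0 := by
    intro z hz
    have h0z : (0:ℝ) < z := hz
    rw [key2 z hz]
    have h1 : 0 < Real.sqrt (Real.pi / (8 * c * z ^ 5)) :=
      Real.sqrt_pos.2 (by positivity)
    have hq : 0 < c ^ 2 - 2 * c * z + 3 * z ^ 2 := by
      nlinarith [sq_nonneg (c - z), mul_pos h0z h0z]
    nlinarith [mul_pos (mul_pos h1 (Real.exp_pos (c / (2 * z)))) hq]
  constructor
  · intro z hz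
    refine ⟨?_, key2 z hz, key3 z hz⟩
    have hBz : Real.sqrt (Real.pi / (2 * c * z)) = B * (Real.sqrt z)⁻¹ := by
      apply levy_sqrt_eq_mul (by positivity) (by positivity)
      rw [inv_pow, Real.sq_sqrt hz.le]
      have hz' : z ≠ 0 := ne_of_gt hz
      field_simp
    rw [key1 z hz, hGdef]
    simp only
    rw [e12 z hz, hBz]
  · have hcont : ContinuousOn (fun z => deriv f z / (f z) ^ 2) (Ioi 0) := by
      apply ContinuousOn.congr (f := G)
      · exact fun z hz => ((hGd z hz).continuousAt).continuousWithinAt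
      · exact fun z hz => key1 z hz
    exact strictAntiOn_of_deriv_neg (convex_Ioi 0) hcont
      (fun z hz => key3 z (by rwa [interior_Ioi] at hz))
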